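/- The probability distribution D that takes value 1 with probability 1/√2 and value −1 with probability 1 − 1/√2 satisfies the 2-sample median constraint with equality (Pr[Y_1 + Y_2 ≤ 0] = 1/2 for Y_1, Y_2 i.i.d. ~ D) and has E[D] = √2 − 1. Combined with the upper bound θ_2 ≤ √2 − 1, this shows θ_2 = √2 − 1. -/

import Mathlib

open MeasureTheory

/-- The distribution taking value `1` with probability `1/√2` and value `-1`
with probability `1 - 1/√2` satisfies the 2-sample median constraint with equality
(`Pr[Y₁ + Y₂ ≤ 0] = 1/2`) and has expectation `√2 - 1`. -/
theorem stmt10 (μ : Measure ℝ)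
    (hμ : μ = ENNReal.ofReal (1 / Real.sqrt 2) • Measure.dirac (1 : ℝ)
        + ENNReal.ofReal (1 - 1 / Real.sqrt 2) • Measure.dirac (-1 : ℝ)) :
    Measure.pi (fun _ : Fin 2 => μ) {y | ∑ i, y i ≤ 0} = (1 : ENNReal) / 2 ∧
      ∫ x, x ∂μ = Real.sqrt 2 - 1 := by
  have h2 : (1:ℝ) ≤ Real.sqrt 2 := by
    rw [show (1:ℝ) = Real.sqrt 1 by simp]; exact Real.sqrt_le_sqrt (by norm_num)
  have hs : Real.sqrt 2 > 0 := by positivity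
  set a : ℝ := 1 / Real.sqrt 2 with ha
  have ha0 : 0 ≤ a := by positivity
  have ha1 : a ≤ 1 := by rw [ha, div_le_one hs]; exact h2
  have hb0 : 0 ≤ 1 - a := by linarith
  haveI hfin : IsFiniteMeasure μ := by
    constructor
    rw [hμ]
    simp [Measure.add_apply, Measure.smul_apply]
  constructor
  · have hmp := measurePreserving_piFinTwo (fun _ : Fin 2 => μ)
    have hT : MeasurableSet {p : ℝ × ℝ | p.1 + p.2 ≤ 0} :=
      measurableSet_le (by fun_prop) measurable_const
    have hset : {y : Fin 2 → ℝ | ∑ i, y i ≤ 0}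
        = (MeasurableEquiv.piFinTwo (fun _ : Fin 2 => ℝ)) ⁻¹' {p : ℝ × ℝ | p.1 + p.2 ≤ 0} := by
      ext y
      simp [MeasurableEquiv.piFinTwo, Fin.sum_univ_two]
    rw [hset, hmp.measure_preimage hT.nullMeasurableSet]
    rw [Measure.prod_apply hT]
    rw [hμ]
    rw [lintegral_add_measure, lintegral_smul_measure, lintegral_smul_measure,
      lintegral_dirac, lintegral_dirac, ← hμ]
    have e1 : μ (Prod.mk (1:ℝ) ⁻¹' {p : ℝ × ℝ | p.1 + p.2 ≤ 0})
        = ENNReal.ofReal (1 - a) := by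
      have h : (Prod.mk (1:ℝ) ⁻¹' {p : ℝ × ℝ | p.1 + p.2 ≤ 0}) = Set.Iic (-1:ℝ) := by
        ext y
        simp only [Set.mem_preimage, Set.mem_setOf_eq, Set.mem_Iic]
        constructor <;> intro h <;> linarith
      rw [h, hμ]
      simp [Measure.add_apply, Measure.smul_apply,
        Measure.dirac_apply' _ measurableSet_Iic]
    have e2 : μ (Prod.mk (-1:ℝ) ⁻¹' {p : ℝ × ℝ | p.1 + p.2 ≤ 0})
        = ENNReal.ofReal a + ENNReal.ofReal (1 - a) := by
      have h : (Prod.mk (-1:ℝ) ⁻¹' {p : ℝ × ℝ | p.1 + p.2 ≤ 0}) = Set.Iic (1:ℝ) := by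
        ext y
        simp only [Set.mem_preimage, Set.mem_setOf_eq, Set.mem_Iic]
        constructor <;> intro h <;> linarith
      rw [h, hμ]
      simp [Measure.add_apply, Measure.smul_apply,
        Measure.dirac_apply' _ measurableSet_Iic]
    rw [e1, e2]
    simp only [smul_eq_mul]
    rw [← ENNReal.ofReal_mul ha0, ← ENNReal.ofReal_add ha0 hb0,
      ← ENNReal.ofReal_mul hb0, ← ENNReal.ofReal_add (by positivity)
        (by nlinarith)]
    have key : a * (1 - a) + (1 - a) * (a + (1 - a)) = 1/2 := by
      have : a * a = 1/2 := by
        rw [ha]; rw [div_mul_div_comm, one_mul, Real.mul_self_sqrt (by norm_num)]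
      nlinarith
    rw [key]
    rw [ENNReal.ofReal_div_of_pos (by norm_num)]
    norm_num
  · rw [hμ]
    have hi1 : Integrable (fun x : ℝ => x) (ENNReal.ofReal a • Measure.dirac (1:ℝ)) := by
      refine Integrable.smul_measure ?_ ENNReal.ofReal_ne_top
      exact ⟨measurable_id.aestronglyMeasurable, by
        rw [HasFiniteIntegral, lintegral_dirac]; exact ENNReal.coe_lt_top⟩
    have hi2 : Integrable (fun x : ℝ => x) (ENNReal.ofReal (1-a) • Measure.dirac (-1:ℝ)) := by
      refine Integrable.smul_measure ?_ ENNReal.ofReal_ne_top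
      exact ⟨measurable_id.aestronglyMeasurable, by
        rw [HasFiniteIntegral, lintegral_dirac]; exact ENNReal.coe_lt_top⟩
    rw [integral_add_measure hi1 hi2, integral_smul_measure, integral_smul_measure,
      integral_dirac, integral_dirac]
    simp only [ENNReal.toReal_ofReal ha0, ENNReal.toReal_ofReal hb0, smul_eq_mul]
    have : a = Real.sqrt 2 / 2 := by
      rw [ha]; rw [div_eq_div_iff (ne_of_gt hs) (by norm_num), one_mul, Real.mul_self_sqrt (by norm_num)]
    rw [this]; ring
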